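/- Let n ≥ 1 and let Ai : ℝ → ℝ be a twice differentiable function with Ai''(t) = t·Ai(t) for all t. Define ψ(x, z) = exp((1/n)·∑_{i<j}(x_i − x_j)(z_i − z_j)) · Ai(n^{-1/3}·∑_i (x_i + z_i)). Then for all x, z: ∑_i ∂_i² ψ(·, z)(x) − (∑_i x_i)·ψ(x, z) = p_n(z)·ψ(x, z), where p_n(z) = ∑_{j} ((z_j − z̄)² + z_j) with z̄ = (1/n)∑_i z_i; equivalently p_n(z) = ∑_{j} (((1/n)∑_i (z_j − z_i))² + z_j). That is, ψ(·, z) is an eigenfunction of H = ∑ ∂_i² − ∑ x_i with eigenvalue p_n(z). -/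

import Mathlib

/-- Second partial derivative `∂ᵢ² f` at `x`. -/
noncomputable def pderiv2 {n : ℕ} (f : (Fin n → ℝ) → ℝ) (i : Fin n)
    (x : Fin n → ℝ) : ℝ :=
  fderiv ℝ (fun y => fderiv ℝ f y (Pi.single i 1)) x (Pi.single i 1)

/-- The common eigenfunction
`ψ(x,z) = exp((1/n) ∑_{i<j} (xᵢ−xⱼ)(zᵢ−zⱼ)) · Ai(n^{-1/3} ∑ᵢ (xᵢ+zᵢ))`. -/
noncomputable def psiFun (n : ℕ) (Ai : ℝ → ℝ) (x z : Fin n → ℝ) : ℝ :=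
  Real.exp ((1 / (n : ℝ)) *
      ∑ p ∈ Finset.univ.filter (fun p : Fin n × Fin n => p.1 < p.2),
        (x p.1 - x p.2) * (z p.1 - z p.2)) *
    Ai ((n : ℝ) ^ (-(1 : ℝ) / 3) * ∑ i, (x i + z i))

open Finset


noncomputable def Smap (n : ℕ) : (Fin n → ℝ) →L[ℝ] ℝ := ∑ i, ContinuousLinearMap.proj i

noncomputable def Lmap (n : ℕ) (z : Fin n → ℝ) : (Fin n → ℝ) →L[ℝ] ℝ :=
  (1 / (n : ℝ)) • ∑ p ∈ Finset.univ.filter (fun p : Fin n × Fin n => p.1 < p.2),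
    (z p.1 - z p.2) • ((ContinuousLinearMap.proj p.1 : (Fin n → ℝ) →L[ℝ] ℝ) -
      (ContinuousLinearMap.proj p.2 : (Fin n → ℝ) →L[ℝ] ℝ))

lemma Smap_apply {n : ℕ} (y : Fin n → ℝ) : Smap n y = ∑ i, y i := by
  simp [Smap]

lemma Smap_single {n : ℕ} (i : Fin n) : Smap n (Pi.single i 1) = 1 := by
  simp [Smap_apply]

lemma Lmap_apply {n : ℕ} (z y : Fin n → ℝ) :
    Lmap n z y = (1 / (n : ℝ)) *
      ∑ p ∈ Finset.univ.filter (fun p : Fin n × Fin n => p.1 < p.2),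
        (y p.1 - y p.2) * (z p.1 - z p.2) := by
  simp only [Lmap, ContinuousLinearMap.smul_apply, ContinuousLinearMap.sum_apply,
    ContinuousLinearMap.sub_apply, ContinuousLinearMap.proj_apply, smul_eq_mul]
  congr 1
  exact Finset.sum_congr rfl (fun p _ => by ring)

lemma sum_pairs {n : ℕ} (F : Fin n × Fin n → ℝ) (hsym : ∀ p : Fin n × Fin n, F p.swap = F p)
    (hdiag : ∀ i : Fin n, F (i, i) = 0) :
    2 * ∑ p ∈ Finset.univ.filter (fun p : Fin n × Fin n => p.1 < p.2), F p
      = ∑ p : Fin n × Fin n, F p := by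
  classical
  have hswap : ∑ p ∈ Finset.univ.filter (fun p : Fin n × Fin n => p.2 < p.1), F p
      = ∑ p ∈ Finset.univ.filter (fun p : Fin n × Fin n => p.1 < p.2), F p := by
    refine Finset.sum_nbij' (fun p => p.swap) (fun p => p.swap) ?_ ?_ ?_ ?_ ?_ <;>
      simp [hsym]
  have hsplit : ∑ p : Fin n × Fin n, F p
      = (∑ p ∈ Finset.univ.filter (fun p : Fin n × Fin n => p.1 < p.2), F p)
        + ∑ p ∈ Finset.univ.filter (fun p : Fin n × Fin n => ¬ p.1 < p.2), F p :=
    (Finset.sum_filter_add_sum_filter_not _ _ _).symm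
  have hrest : ∑ p ∈ Finset.univ.filter (fun p : Fin n × Fin n => ¬ p.1 < p.2), F p
      = ∑ p ∈ Finset.univ.filter (fun p : Fin n × Fin n => p.2 < p.1), F p := by
    rw [← Finset.sum_filter_add_sum_filter_not
      (Finset.univ.filter (fun p : Fin n × Fin n => ¬ p.1 < p.2)) (fun p => p.2 < p.1) F]
    have h1 : (Finset.univ.filter (fun p : Fin n × Fin n => ¬ p.1 < p.2)).filter
        (fun p => p.2 < p.1) = Finset.univ.filter (fun p : Fin n × Fin n => p.2 < p.1) := by
      ext p; simp; omega
    have h2 : ∑ p ∈ (Finset.univ.filter (fun p : Fin n × Fin n => ¬ p.1 < p.2)).filter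
        (fun p => ¬ p.2 < p.1), F p = 0 := by
      apply Finset.sum_eq_zero
      rintro ⟨a, b⟩ hp
      simp only [Finset.mem_filter, Finset.mem_univ, true_and] at hp
      have : a = b := le_antisymm (not_lt.1 hp.2) (not_lt.1 hp.1)
      subst this; exact hdiag a
    rw [h1, h2, add_zero]
  rw [hsplit, hrest, hswap]; ring

lemma he2 {n : ℕ} (z : Fin n → ℝ) (i : Fin n) :
    ∑ j, (Pi.single i 1 : Fin n → ℝ) j * z j = z i := by
  simp [Pi.single_apply, ite_mul]

lemma hinner {n : ℕ} (z e : Fin n → ℝ) (a : Fin n) :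
    ∑ b, (e a - e b) * (z a - z b)
      = (n:ℝ) * (e a * z a) - e a * (∑ j, z j) - (∑ j, e j) * z a + ∑ j, e j * z j := by
  simp_rw [sub_mul, mul_sub, Finset.sum_sub_distrib]
  rw [Finset.sum_const, Finset.card_univ, Fintype.card_fin, nsmul_eq_mul,
    ← Finset.mul_sum, ← Finset.sum_mul]
  ring

lemma Lmap_single {n : ℕ} (hn : (n:ℝ) ≠ 0) (z : Fin n → ℝ) (i : Fin n) :
    Lmap n z (Pi.single i 1) = z i - (∑ j, z j) / n := by
  classical
  set e : Fin n → ℝ := Pi.single i 1 with he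
  have he1 : ∑ j, e j = 1 := by simp [he]
  have hez : ∑ j, e j * z j = z i := he2 z i
  have hd : ∀ j : Fin n, (fun p : Fin n × Fin n => (e p.1 - e p.2) * (z p.1 - z p.2)) (j, j) = 0 := by
    intro j; simp
  have hs : ∀ p : Fin n × Fin n,
      (fun p : Fin n × Fin n => (e p.1 - e p.2) * (z p.1 - z p.2)) p.swap
        = (fun p : Fin n × Fin n => (e p.1 - e p.2) * (z p.1 - z p.2)) p := by
    intro p; simp only [Prod.fst_swap, Prod.snd_swap]; ring
  have hpair := sum_pairs (fun p : Fin n × Fin n => (e p.1 - e p.2) * (z p.1 - z p.2)) hs hd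
  have hfull : ∑ p : Fin n × Fin n, (e p.1 - e p.2) * (z p.1 - z p.2)
      = 2 * ((n:ℝ) * z i - ∑ j, z j) := by
    rw [Fintype.sum_prod_type]
    have : ∀ a : Fin n, ∑ b, (e a - e b) * (z a - z b)
        = (n:ℝ) * (e a * z a) - e a * (∑ j, z j) - (∑ j, e j) * z a + ∑ j, e j * z j :=
      hinner z e
    simp_rw [this, he1, hez, one_mul]
    rw [Finset.sum_add_distrib, Finset.sum_sub_distrib, Finset.sum_sub_distrib,
      ← Finset.mul_sum, ← Finset.sum_mul, Finset.sum_const, Finset.card_univ,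
      Fintype.card_fin, nsmul_eq_mul]
    rw [hez, he1]
    ring
  rw [Lmap_apply]
  have : ∑ p ∈ Finset.univ.filter (fun p : Fin n × Fin n => p.1 < p.2),
      (e p.1 - e p.2) * (z p.1 - z p.2) = (n:ℝ) * z i - ∑ j, z j := by
    linarith [hpair, hfull]
  rw [this]; field_simp


section Main

variable (n : ℕ) (Ai : ℝ → ℝ) (z : Fin n → ℝ)

-- abbreviations
noncomputable def cC : ℝ := (n : ℝ) ^ (-(1 : ℝ) / 3)
noncomputable def Tf (y : Fin n → ℝ) : ℝ := cC n * (Smap n y + ∑ i, z i)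
noncomputable def Ef (y : Fin n → ℝ) : ℝ := Real.exp (Lmap n z y)

lemma psi_eq (y : Fin n → ℝ) :
    psiFun n Ai y z = Ef n z y * Ai (Tf n z y) := by
  unfold psiFun Ef Tf cC
  rw [Lmap_apply, Smap_apply, Finset.sum_add_distrib]

lemma hTd (y : Fin n → ℝ) : HasFDerivAt (Tf n z) (cC n • Smap n) y :=
  (((Smap n).hasFDerivAt).add_const _).const_mul _

lemma hEd (y : Fin n → ℝ) : HasFDerivAt (Ef n z) (Ef n z y • Lmap n z) y :=
  (Real.hasDerivAt_exp (Lmap n z y)).comp_hasFDerivAt y (Lmap n z).hasFDerivAt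

lemma hAd (hAi : Differentiable ℝ Ai) (y : Fin n → ℝ) :
    HasFDerivAt (fun y => Ai (Tf n z y)) (deriv Ai (Tf n z y) • (cC n • Smap n)) y :=
  ((hAi (Tf n z y)).hasDerivAt).comp_hasFDerivAt y (hTd n z y)

lemma hA'd (hAi' : Differentiable ℝ (deriv Ai))
    (hAiry : ∀ t : ℝ, deriv (deriv Ai) t = t * Ai t) (y : Fin n → ℝ) :
    HasFDerivAt (fun y => deriv Ai (Tf n z y))
      ((Tf n z y * Ai (Tf n z y)) • (cC n • Smap n)) y := by
  have := ((hAi' (Tf n z y)).hasDerivAt).comp_hasFDerivAt y (hTd n z y)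
  rwa [hAiry] at this

lemma hPsid (hAi : Differentiable ℝ Ai) (y : Fin n → ℝ) :
    HasFDerivAt (fun y => psiFun n Ai y z)
      (Ef n z y • (deriv Ai (Tf n z y) • (cC n • Smap n)) +
        Ai (Tf n z y) • (Ef n z y • Lmap n z)) y := by
  have h := (hEd n z y).mul (hAd n Ai z hAi y)
  have hfun : (fun y => psiFun n Ai y z) = fun y => Ef n z y * Ai (Tf n z y) :=
    funext (psi_eq n Ai z)
  rw [hfun]
  exact h


noncomputable def aC (i : Fin n) : ℝ := z i - (∑ j, z j) / n

lemma first_deriv (hn0 : (n:ℝ) ≠ 0) (hAi : Differentiable ℝ Ai) (i : Fin n) :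
    (fun y => fderiv ℝ (fun y => psiFun n Ai y z) y (Pi.single i 1))
      = fun y => aC n z i * psiFun n Ai y z +
          cC n * (Ef n z y * deriv Ai (Tf n z y)) := by
  funext y
  rw [(hPsid n Ai z hAi y).fderiv]
  simp only [ContinuousLinearMap.add_apply, ContinuousLinearMap.smul_apply, smul_eq_mul,
    Lmap_single hn0, Smap_single]
  rw [psi_eq]
  unfold aC
  ring

lemma second_deriv (hn0 : (n:ℝ) ≠ 0) (hAi : Differentiable ℝ Ai)
    (hAi' : Differentiable ℝ (deriv Ai))
    (hAiry : ∀ t : ℝ, deriv (deriv Ai) t = t * Ai t) (i : Fin n) (x : Fin n → ℝ) :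
    pderiv2 (fun y => psiFun n Ai y z) i x
      = aC n z i ^ 2 * psiFun n Ai x z
        + aC n z i * (2 * cC n * (Ef n z x * deriv Ai (Tf n z x)))
        + cC n ^ 2 * Tf n z x * psiFun n Ai x z := by
  unfold pderiv2
  rw [first_deriv n Ai z hn0 hAi i]
  have hg : HasFDerivAt
      (fun y => aC n z i * psiFun n Ai y z + cC n * (Ef n z y * deriv Ai (Tf n z y)))
      (aC n z i • (Ef n z x • (deriv Ai (Tf n z x) • (cC n • Smap n)) +
          Ai (Tf n z x) • (Ef n z x • Lmap n z)) +
        cC n • (Ef n z x • ((Tf n z x * Ai (Tf n z x)) • (cC n • Smap n)) +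
          deriv Ai (Tf n z x) • (Ef n z x • Lmap n z))) x :=
    ((hPsid n Ai z hAi x).const_mul _).add
      (((hEd n z x).mul (hA'd n Ai z hAi' hAiry x)).const_mul _)
  rw [hg.fderiv]
  simp only [ContinuousLinearMap.add_apply, ContinuousLinearMap.smul_apply, smul_eq_mul,
    Lmap_single hn0, Smap_single]
  rw [psi_eq]
  unfold aC
  ring

end Main


/-- `ψ(·,z)` is an eigenfunction of `H = ∑ ∂ᵢ² − ∑ xᵢ` with eigenvalue
`pₙ(z) = ∑ⱼ ((zⱼ − z̄)² + zⱼ)` where `z̄ = (1/n) ∑ᵢ zᵢ`. -/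
theorem psi_H_eigenfunction (n : ℕ) (hn : 1 ≤ n) (Ai : ℝ → ℝ)
    (hAi : Differentiable ℝ Ai) (hAi' : Differentiable ℝ (deriv Ai))
    (hAiry : ∀ t : ℝ, deriv (deriv Ai) t = t * Ai t) :
    ∀ x z : Fin n → ℝ,
      (∑ i, pderiv2 (fun y => psiFun n Ai y z) i x) -
          (∑ i, x i) * psiFun n Ai x z =
        (∑ j, ((z j - (∑ i, z i) / n) ^ 2 + z j)) * psiFun n Ai x z := by
  intro x z
  have hnpos : (0:ℝ) < n := by exact_mod_cast hn
  have hn0 : (n:ℝ) ≠ 0 := ne_of_gt hnpos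
  have hsum0 : ∑ i, aC n z i = 0 := by
    unfold aC
    rw [Finset.sum_sub_distrib, Finset.sum_const, Finset.card_univ, Fintype.card_fin,
      nsmul_eq_mul]
    field_simp
    ring
  have hc3 : (n:ℝ) * cC n ^ 3 = 1 := by
    unfold cC
    rw [← Real.rpow_natCast ((n:ℝ) ^ (-(1:ℝ)/3)) 3, ← Real.rpow_mul hnpos.le]
    norm_num
    rw [Real.rpow_neg_one]
    field_simp
  rw [Finset.sum_congr rfl (fun i _ => second_deriv n Ai z hn0 hAi hAi' hAiry i x)]
  rw [Finset.sum_add_distrib, Finset.sum_add_distrib, ← Finset.sum_mul, ← Finset.sum_mul,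
    hsum0, Finset.sum_const, Finset.card_univ, Fintype.card_fin, nsmul_eq_mul]
  rw [show (∑ j, ((z j - (∑ i, z i) / n) ^ 2 + z j)) = (∑ j, aC n z j ^ 2) + ∑ j, z j by
    rw [← Finset.sum_add_distrib]; rfl]
  unfold Tf
  rw [Smap_apply]
  linear_combination ((∑ i, x i) + ∑ i, z i) * psiFun n Ai x z * hc3
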